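/- For every real r > 3/2 there exists a constant C_r > 0 such that for every τ ≥ 0 and all a, b, c : ℤ² → [0,∞]: ∑_{(j,k)∈ℤ²×ℤ²} ‖j‖ · a(j) · b(k) · ‖j+k‖^{r} e^{τ‖j+k‖} · c(j+k) ≤ C_r · S_{r+1/2,τ}(a) · (b(0) + S_{r,τ}(b)) · (S_{r,τ}(c) + S_{r+1/2,τ}(c)). (This is the Fourier-coefficient form of the vertical-advection estimate |⟨A^r e^{τA}((∫₀^z ∇·f ds) ∂_z g), A^r e^{τA}h⟩| of Lemma A.2.) -/

import Mathlib

open scoped ENNReal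

noncomputable section

/-- Euclidean norm of a lattice point `k ∈ ℤ²` viewed as a vector in `ℝ²`. -/
def nz (k : ℤ × ℤ) : ℝ := Real.sqrt ((k.1 : ℝ) ^ 2 + (k.2 : ℝ) ^ 2)

/-- The weighted ℓ²-norm `S_{ρ,τ}(a) = (∑_k ‖k‖^{2ρ} e^{2τ‖k‖} a(k)²)^{1/2}`. -/
def S (ρ τ : ℝ) (a : ℤ × ℤ → ℝ≥0∞) : ℝ≥0∞ :=
  (∑' k : ℤ × ℤ, ENNReal.ofReal (nz k ^ (2 * ρ) * Real.exp (2 * τ * nz k)) * (a k) ^ 2)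
    ^ ((1 : ℝ) / 2)

/-! ### Auxiliary facts about `nz` -/

lemma nz_nonneg (k : ℤ × ℤ) : 0 ≤ nz k := Real.sqrt_nonneg _

lemma nz_zero : nz 0 = 0 := by simp [nz]

/-- Identify a lattice point with a complex number. -/
def cz (k : ℤ × ℤ) : ℂ := ⟨(k.1 : ℝ), (k.2 : ℝ)⟩

lemma nz_eq_abs (k : ℤ × ℤ) : nz k = ‖cz k‖ := by
  simp only [Complex.norm_def, Complex.normSq_mk, nz, cz, sq]

lemma nz_add_le (j k : ℤ × ℤ) : nz (j + k) ≤ nz j + nz k := by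
  have : cz (j + k) = cz j + cz k := by
    simp [cz, Complex.ext_iff, Prod.fst_add, Prod.snd_add]
  rw [nz_eq_abs, nz_eq_abs, nz_eq_abs, this]
  exact norm_add_le _ _

lemma one_le_nz {k : ℤ × ℤ} (h : k ≠ 0) : 1 ≤ nz k := by
  have hne : ¬(k.1 = 0 ∧ k.2 = 0) := by
    intro hc; exact h (Prod.ext hc.1 hc.2)
  have h1 : (1:ℝ) ≤ (k.1 : ℝ) ^ 2 + (k.2 : ℝ) ^ 2 := by
    by_cases h1 : k.1 = 0
    · have h2 : k.2 ≠ 0 := by tauto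
      have : (1:ℝ) ≤ (k.2:ℝ)^2 := by
        have := Int.one_le_abs (by simpa using h2)
        nlinarith [sq_abs (k.2:ℝ), (by exact_mod_cast this : (1:ℝ) ≤ |(k.2:ℝ)|)]
      nlinarith [sq_nonneg ((k.1:ℝ))]
    · have : (1:ℝ) ≤ (k.1:ℝ)^2 := by
        have := Int.one_le_abs (by simpa using h1)
        nlinarith [(by exact_mod_cast this : (1:ℝ) ≤ |(k.1:ℝ)|), sq_abs ((k.1:ℝ))]
      nlinarith [sq_nonneg ((k.2:ℝ))]
  calc (1:ℝ) = Real.sqrt 1 := by simp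
  _ ≤ nz k := Real.sqrt_le_sqrt h1

lemma nz_neg (k : ℤ × ℤ) : nz (-k) = nz k := by simp [nz]

/-! ### The `ℝ≥0∞`-valued weight and norms -/

/-- Indicator of nonzero lattice points. -/
def χ (k : ℤ × ℤ) : ℝ≥0∞ := if k = 0 then 0 else 1

/-- `ℝ≥0∞`-valued weight. -/
def W (k : ℤ × ℤ) : ℝ≥0∞ := ENNReal.ofReal (nz k)

/-- Unweighted Sobolev-type norm. -/
def Nn (ρ : ℝ) (a : ℤ × ℤ → ℝ≥0∞) : ℝ≥0∞ :=
  (∑' k : ℤ × ℤ, W k ^ (2 * ρ) * a k ^ 2) ^ ((1 : ℝ) / 2)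

/-- The key constant. -/
def Kc (r : ℝ) : ℝ≥0∞ := ∑' j : ℤ × ℤ, χ j * W j ^ (1 - 2 * r)

lemma W_zero : W 0 = 0 := by simp [W, nz_zero]

lemma W_ne_top (k : ℤ × ℤ) : W k ≠ ⊤ := ENNReal.ofReal_ne_top

lemma one_le_W {k : ℤ × ℤ} (h : k ≠ 0) : 1 ≤ W k := by
  rw [W, ← ENNReal.ofReal_one]
  exact ENNReal.ofReal_le_ofReal (one_le_nz h)

lemma W_ne_zero {k : ℤ × ℤ} (h : k ≠ 0) : W k ≠ 0 :=
  fun hc => by simpa [hc] using one_le_W h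

lemma W_add_le (j k : ℤ × ℤ) : W (j + k) ≤ W j + W k := by
  rw [W, W, W, ← ENNReal.ofReal_add (nz_nonneg j) (nz_nonneg k)]
  exact ENNReal.ofReal_le_ofReal (nz_add_le j k)

lemma W_mul_rpow {j : ℤ × ℤ} (h : j ≠ 0) (u v : ℝ) :
    W j ^ u * W j ^ v = W j ^ (u + v) :=
  (ENNReal.rpow_add _ _ (W_ne_zero h) (W_ne_top j)).symm

lemma rpow_sq (x : ℝ≥0∞) (e : ℝ) : (x ^ e) ^ (2:ℕ) = x ^ (2 * e) := by
  rw [← ENNReal.rpow_natCast (x ^ e) 2, ← ENNReal.rpow_mul]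
  norm_num [mul_comm]

/-! ### Cauchy–Schwarz for `tsum` over `ℤ × ℤ` -/

lemma cs_tsum (f g : ℤ × ℤ → ℝ≥0∞) :
    ∑' i, f i * g i
      ≤ (∑' i, f i ^ 2) ^ ((1:ℝ)/2) * (∑' i, g i ^ 2) ^ ((1:ℝ)/2) := by
  have hpq : Real.HolderConjugate 2 2 := Real.HolderConjugate.two_two
  have h := ENNReal.lintegral_mul_le_Lp_mul_Lq
      (MeasureTheory.Measure.count : MeasureTheory.Measure (ℤ × ℤ)) hpq
      (measurable_of_countable f).aemeasurable (measurable_of_countable g).aemeasurable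
  have hcast : ∀ x : ℝ≥0∞, x ^ (2:ℝ) = x ^ (2:ℕ) := fun x => by
    rw [← ENNReal.rpow_natCast x 2]; norm_num
  simp only [Pi.mul_apply, MeasureTheory.lintegral_count, hcast] at h
  exact h

lemma tsum_shift_left (F : ℤ × ℤ → ℝ≥0∞) (j : ℤ × ℤ) :
    ∑' k, F (j + k) = ∑' m, F m :=
  (Equiv.addLeft j).tsum_eq F

lemma tsum_shift_right (F : ℤ × ℤ → ℝ≥0∞) (k : ℤ × ℤ) :
    ∑' j, F (j + k) = ∑' m, F m :=
  (Equiv.addRight k).tsum_eq F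

lemma cs_shift_right (A Cc : ℤ × ℤ → ℝ≥0∞) (k : ℤ × ℤ) :
    ∑' j, A j * Cc (j + k)
      ≤ (∑' i, A i ^ 2) ^ ((1:ℝ)/2) * (∑' m, Cc m ^ 2) ^ ((1:ℝ)/2) := by
  refine (cs_tsum A (fun j => Cc (j + k))).trans (le_of_eq ?_)
  rw [tsum_shift_right (fun m => Cc m ^ 2) k]

lemma cs_shift_left (B Cc : ℤ × ℤ → ℝ≥0∞) (j : ℤ × ℤ) :
    ∑' k, B k * Cc (j + k)
      ≤ (∑' i, B i ^ 2) ^ ((1:ℝ)/2) * (∑' m, Cc m ^ 2) ^ ((1:ℝ)/2) := by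
  refine (cs_tsum B (fun k => Cc (j + k))).trans (le_of_eq ?_)
  rw [tsum_shift_left (fun m => Cc m ^ 2) j]

/-! ### ℓ¹- and ℓ²-type bounds -/

lemma l1_bound {r : ℝ} (s ρ : ℝ) (hs : s = (1 - 2*r)/2 + ρ) (a : ℤ × ℤ → ℝ≥0∞) :
    ∑' j, χ j * W j ^ s * a j ≤ Kc r ^ ((1:ℝ)/2) * Nn ρ a := by
  have key : ∀ j, χ j * W j ^ s * a j
      = (χ j * W j ^ ((1 - 2*r)/2)) * (W j ^ ρ * a j) := by
    intro j
    by_cases h : j = 0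
    · simp [χ, h]
    · simp only [χ, if_neg h, one_mul]
      rw [mul_comm (W j ^ ((1 - 2*r)/2)) _, mul_assoc, mul_comm (a j) _, ← mul_assoc,
        W_mul_rpow h, hs]
      ring_nf
  rw [tsum_congr key]
  refine (cs_tsum _ _).trans (mul_le_mul' (le_of_eq ?_) (le_of_eq ?_))
  · rw [Kc]
    refine congrArg (· ^ ((1:ℝ)/2)) (tsum_congr fun j => ?_)
    by_cases h : j = 0
    · simp [χ, h]
    · simp only [χ, if_neg h, one_mul, rpow_sq]
      rw [show 2 * ((1 - 2*r)/2) = 1 - 2*r by ring]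
  · rw [Nn]
    refine congrArg (· ^ ((1:ℝ)/2)) (tsum_congr fun j => ?_)
    rw [mul_pow, rpow_sq]

lemma l2_bound {r : ℝ} (e : ℝ) (he : e ≤ r) (c : ℤ × ℤ → ℝ≥0∞) :
    (∑' m, (χ m * W m ^ e * c m) ^ 2) ^ ((1:ℝ)/2) ≤ Nn r c := by
  rw [Nn]
  refine ENNReal.rpow_le_rpow ?_ (by norm_num)
  refine Summable.tsum_le_tsum (fun m => ?_) ENNReal.summable ENNReal.summable
  by_cases h : m = 0
  · simp [χ, h]
  · simp only [χ, if_neg h, one_mul, mul_pow, rpow_sq]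
    exact mul_le_mul'
      (ENNReal.rpow_le_rpow_of_exponent_le (one_le_W h) (by linarith)) le_rfl

/-! ### Finiteness of the constant -/

lemma Kc_ne_top {r : ℝ} (hr : 3/2 < r) : Kc r ≠ ⊤ := by
  have hk : (2:ℝ) < 2*r - 1 := by linarith
  have hsum : Summable fun x : Fin 2 → ℤ => ‖x‖ ^ (-(2*r - 1)) :=
    EisensteinSeries.summable_one_div_norm_rpow hk
  have hsum' : Summable fun j : ℤ × ℤ => ‖(finTwoArrowEquiv ℤ).symm j‖ ^ (-(2*r - 1)) :=
    ((finTwoArrowEquiv ℤ).symm.summable_iff).mpr hsum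
  have hle : ∀ j : ℤ × ℤ, χ j * W j ^ (1 - 2*r)
      ≤ ENNReal.ofReal (‖(finTwoArrowEquiv ℤ).symm j‖ ^ (-(2*r - 1))) := by
    intro j
    by_cases h : j = 0
    · simp [χ, h]
    · have hvnorm : ‖(finTwoArrowEquiv ℤ).symm j‖
          = max (|(j.1:ℝ)|) (|(j.2:ℝ)|) := by
        rw [EisensteinSeries.norm_eq_max_natAbs]
        simp [finTwoArrowEquiv, Nat.cast_max, Nat.cast_natAbs]
      have hvpos : 0 < ‖(finTwoArrowEquiv ℤ).symm j‖ := by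
        rw [norm_pos_iff]
        intro hc
        apply h
        have := congrArg (finTwoArrowEquiv ℤ) hc
        exact (by simpa using this : j = (0, 0))
      have hvle : ‖(finTwoArrowEquiv ℤ).symm j‖ ≤ nz j := by
        rw [hvnorm]
        have h1 : |(j.1:ℝ)| ≤ nz j := by
          rw [nz, ← Real.sqrt_sq_eq_abs (j.1:ℝ)]
          exact Real.sqrt_le_sqrt (by nlinarith [sq_nonneg ((j.2:ℝ))])
        have h2 : |(j.2:ℝ)| ≤ nz j := by
          rw [nz, ← Real.sqrt_sq_eq_abs (j.2:ℝ)]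
          exact Real.sqrt_le_sqrt (by nlinarith [sq_nonneg ((j.1:ℝ))])
        exact max_le h1 h2
      simp only [χ, if_neg h, one_mul]
      have hnzpos : 0 < nz j := lt_of_lt_of_le one_pos (one_le_nz h)
      rw [W, ENNReal.ofReal_rpow_of_pos hnzpos]
      apply ENNReal.ofReal_le_ofReal
      have : (1 - 2*r : ℝ) = -(2*r - 1) := by ring
      rw [this]
      exact Real.rpow_le_rpow_of_nonpos hvpos hvle (by linarith)
  have h1 : Kc r ≤ ∑' j : ℤ × ℤ,
      ENNReal.ofReal (‖(finTwoArrowEquiv ℤ).symm j‖ ^ (-(2*r - 1))) :=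
    Summable.tsum_le_tsum hle ENNReal.summable ENNReal.summable
  have h2 : (∑' j : ℤ × ℤ,
      ENNReal.ofReal (‖(finTwoArrowEquiv ℤ).symm j‖ ^ (-(2*r - 1)))) ≠ ⊤ := by
    rw [← ENNReal.ofReal_tsum_of_nonneg (fun j => Real.rpow_nonneg (norm_nonneg _) _) hsum']
    exact ENNReal.ofReal_ne_top
  exact ne_top_of_le_ne_top h2 h1

/-! ### Weight splitting lemmas -/

lemma weight_split {r : ℝ} (hr0 : 0 ≤ r) (j k : ℤ × ℤ) :
    W (j + k) ^ r ≤ 2 ^ r * (W j ^ r + W k ^ r) := by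
  calc W (j+k) ^ r ≤ (W j + W k) ^ r := ENNReal.rpow_le_rpow (W_add_le j k) hr0
  _ ≤ (2 * (W j ⊔ W k)) ^ r := by
      refine ENNReal.rpow_le_rpow ?_ hr0
      rw [two_mul]; exact add_le_add le_sup_left le_sup_right
  _ = 2 ^ r * (W j ⊔ W k) ^ r := ENNReal.mul_rpow_of_nonneg _ _ hr0
  _ ≤ 2 ^ r * (W j ^ r + W k ^ r) := by
      refine mul_le_mul' le_rfl ?_
      rcases le_total (W j) (W k) with h | h
      · rw [sup_eq_right.mpr h]; exact le_add_self
      · rw [sup_eq_left.mpr h]; exact le_self_add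

lemma Whalf {j k : ℤ × ℤ} (hk : k ≠ 0) (hm : j + k ≠ 0) :
    W j ^ ((1:ℝ)/2) ≤ 2 * (W k ^ ((1:ℝ)/2) * W (j+k) ^ ((1:ℝ)/2)) := by
  have htri : W j ≤ W (j+k) + W k := by
    have h0 : nz j ≤ nz (j+k) + nz k := by
      have := nz_add_le (j+k) (-k)
      simpa [nz_neg] using this
    rw [W, W, W, ← ENNReal.ofReal_add (nz_nonneg _) (nz_nonneg _)]
    exact ENNReal.ofReal_le_ofReal h0
  have h2 : W j ≤ 2 * (W k * W (j+k)) := by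
    rw [two_mul]
    refine htri.trans (add_le_add ?_ ?_)
    · exact le_mul_of_one_le_left' (one_le_W hk)
    · exact le_mul_of_one_le_right' (one_le_W hm)
  calc W j ^ ((1:ℝ)/2) ≤ (2 * (W k * W (j+k))) ^ ((1:ℝ)/2) :=
        ENNReal.rpow_le_rpow h2 (by norm_num)
  _ = 2 ^ ((1:ℝ)/2) * (W k ^ ((1:ℝ)/2) * W (j+k) ^ ((1:ℝ)/2)) := by
        rw [ENNReal.mul_rpow_of_nonneg _ _ (by norm_num : (0:ℝ) ≤ 1/2),
          ENNReal.mul_rpow_of_nonneg _ _ (by norm_num : (0:ℝ) ≤ 1/2)]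
  _ ≤ 2 * (W k ^ ((1:ℝ)/2) * W (j+k) ^ ((1:ℝ)/2)) := by
        refine mul_le_mul' ?_ le_rfl
        calc (2:ℝ≥0∞) ^ ((1:ℝ)/2) ≤ 2 ^ (1:ℝ) :=
              ENNReal.rpow_le_rpow_of_exponent_le (by norm_num) (by norm_num)
        _ = 2 := ENNReal.rpow_one 2

/-! ### The core estimate (τ = 0 form) -/

lemma core {r : ℝ} (hr : 3/2 < r) (a b c : ℤ × ℤ → ℝ≥0∞) :
    ∑' j : ℤ × ℤ, ∑' k : ℤ × ℤ, W j * a j * b k * W (j+k) ^ r * c (j+k)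
      ≤ (1 + 2 ^ r * 3 * Kc r ^ ((1:ℝ)/2)) * Nn (r + 1/2) a * (b 0 + Nn r b)
          * Nn r c := by
  have hr0 : (0:ℝ) < r := by linarith
  -- the functions
  let A : ℤ × ℤ → ℝ≥0∞ := fun j => W j ^ (r + 1/2) * a j
  let B : ℤ × ℤ → ℝ≥0∞ := fun k => χ k * W k ^ ((1:ℝ)/2) * b k
  let Cc : ℤ × ℤ → ℝ≥0∞ := fun m => χ m * W m ^ ((1:ℝ)/2) * c m
  let D : ℤ × ℤ → ℝ≥0∞ := fun k => χ k * W k ^ r * b k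
  let Cz : ℤ × ℤ → ℝ≥0∞ := fun m => χ m * c m
  have hNa : (∑' i, A i ^ 2) ^ ((1:ℝ)/2) = Nn (r + 1/2) a := by
    rw [Nn]
    refine congrArg (· ^ ((1:ℝ)/2)) (tsum_congr fun i => ?_)
    show (W i ^ (r + 1/2) * a i) ^ 2 = W i ^ (2 * (r + 1/2)) * a i ^ 2
    rw [mul_pow, rpow_sq]
  have hB2 : (∑' i, B i ^ 2) ^ ((1:ℝ)/2) ≤ Nn r b :=
    l2_bound (r := r) ((1:ℝ)/2) (by linarith) b
  have hC2 : (∑' m, Cc m ^ 2) ^ ((1:ℝ)/2) ≤ Nn r c :=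
    l2_bound (r := r) ((1:ℝ)/2) (by linarith) c
  have hD2 : (∑' i, D i ^ 2) ^ ((1:ℝ)/2) ≤ Nn r b := l2_bound (r := r) r le_rfl b
  have hCz2 : (∑' m, Cz m ^ 2) ^ ((1:ℝ)/2) ≤ Nn r c := by
    have h := l2_bound (r := r) 0 (le_of_lt hr0) c
    have he : ∀ m, χ m * W m ^ (0:ℝ) * c m = Cz m := by
      intro m; rw [ENNReal.rpow_zero, mul_one]
    rw [tsum_congr fun m => congrArg (· ^ 2) (he m)] at h
    exact h
  have hl1a : ∑' j, W j * a j ≤ Kc r ^ ((1:ℝ)/2) * Nn (r + 1/2) a := by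
    have heq : ∀ j, W j * a j = χ j * W j ^ (1:ℝ) * a j := by
      intro j; by_cases h : j = 0
      · simp [χ, h, W_zero]
      · simp [χ, if_neg h, ENNReal.rpow_one]
    rw [tsum_congr heq]
    exact l1_bound 1 (r + 1/2) (by ring) a
  have hl1B : ∑' k, B k ≤ Kc r ^ ((1:ℝ)/2) * Nn r b :=
    l1_bound ((1:ℝ)/2) r (by ring) b
  -- pointwise splitting of the summand
  have hsplit : ∀ j k, W j * a j * b k * W (j+k) ^ r * c (j+k)
      = (if k = 0 then b 0 * (A j * Cc j) else 0)
        + W j * a j * (χ k * b k) * W (j+k) ^ r * (χ (j+k) * c (j+k)) := by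
    intro j k
    by_cases hk : k = 0
    · subst hk
      have hχ0 : χ (0 : ℤ × ℤ) = 0 := if_pos rfl
      simp only [if_pos rfl, hχ0, zero_mul, mul_zero, add_zero]
      by_cases hj : j = 0
      · subst hj
        simp [W_zero, A, Cc, χ]
      · have hχj : χ j = 1 := if_neg hj
        have hthis : b 0 * (A j * Cc j)
            = b 0 * ((W j ^ (r + 1/2) * a j) * (W j ^ ((1:ℝ)/2) * c j)) := by
          show b 0 * ((W j ^ (r + 1/2) * a j) * (χ j * W j ^ ((1:ℝ)/2) * c j)) = _
          rw [hχj, one_mul]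
        rw [hthis]
        calc W j * a j * b 0 * W j ^ r * c j
            = (W j ^ (1:ℝ) * W j ^ r) * (a j * b 0 * c j) := by
              rw [ENNReal.rpow_one]; ring
        _ = W j ^ (1 + r) * (a j * b 0 * c j) := by rw [W_mul_rpow hj]
        _ = W j ^ ((r + 1/2) + 1/2) * (a j * b 0 * c j) := by
              rw [show (1:ℝ) + r = (r + 1/2) + 1/2 by ring]
        _ = (W j ^ (r + 1/2) * W j ^ ((1:ℝ)/2)) * (a j * b 0 * c j) := by
              rw [W_mul_rpow hj]
        _ = b 0 * ((W j ^ (r + 1/2) * a j) * (W j ^ ((1:ℝ)/2) * c j)) := by ring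
    · simp only [if_neg hk, zero_add]
      have hχk : χ k = 1 := if_neg hk
      rw [hχk, one_mul]
      by_cases hm : j + k = 0
      · rw [hm, W_zero, ENNReal.zero_rpow_of_pos hr0]
        ring
      · have hχm : χ (j+k) = 1 := if_neg hm
        rw [hχm, one_mul]
  -- the k = 0 part
  have hT0 : ∑' (j : ℤ × ℤ), b 0 * (A j * Cc j)
      ≤ b 0 * (Nn (r + 1/2) a * Nn r c) := by
    rw [ENNReal.tsum_mul_left]
    refine mul_le_mul' le_rfl ?_
    refine (cs_tsum A Cc).trans ?_
    rw [hNa]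
    exact mul_le_mul' le_rfl hC2
  -- pointwise bound for the k ≠ 0 part
  have hpt : ∀ j k, W j * a j * (χ k * b k) * W (j+k) ^ r * (χ (j+k) * c (j+k))
      ≤ 2 ^ r * (2 * (B k * (A j * Cc (j+k)))
        + (W j * a j) * (D k * Cz (j+k))) := by
    intro j k
    calc W j * a j * (χ k * b k) * W (j+k) ^ r * (χ (j+k) * c (j+k))
        ≤ W j * a j * (χ k * b k) * (2 ^ r * (W j ^ r + W k ^ r))
            * (χ (j+k) * c (j+k)) := by
          refine mul_le_mul' (mul_le_mul' le_rfl (weight_split (le_of_lt hr0) j k)) le_rfl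
    _ = 2 ^ r * ((W j ^ r * W j) * a j * (χ k * b k) * (χ (j+k) * c (j+k))
          + (W j * a j) * (D k * Cz (j+k))) := by
          show _ = 2 ^ r * (_ + (W j * a j) * ((χ k * W k ^ r * b k) * (χ (j+k) * c (j+k))))
          ring
    _ ≤ 2 ^ r * (2 * (B k * (A j * Cc (j+k)))
          + (W j * a j) * (D k * Cz (j+k))) := by
          refine mul_le_mul' le_rfl (add_le_add ?_ le_rfl)
          by_cases hk : k = 0
          · simp [χ, hk]
          · by_cases hm : j + k = 0
            · simp [χ, hm]
            · by_cases hj : j = 0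
              · simp [hj, W_zero, ENNReal.zero_rpow_of_pos hr0]
              · have hχk : χ k = 1 := if_neg hk
                have hχm : χ (j+k) = 1 := if_neg hm
                show W j ^ r * W j * a j * (χ k * b k) * (χ (j+k) * c (j+k))
                  ≤ 2 * ((χ k * W k ^ ((1:ℝ)/2) * b k)
                      * ((W j ^ (r + 1/2) * a j) * (χ (j+k) * W (j+k) ^ ((1:ℝ)/2) * c (j+k))))
                rw [hχk, hχm, one_mul, one_mul, one_mul, one_mul]
                have hWj : W j ^ r * W j = W j ^ (r + 1/2) * W j ^ ((1:ℝ)/2) := by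
                  rw [W_mul_rpow hj, show r + 1/2 + 1/2 = r + (1:ℝ) by ring,
                    ENNReal.rpow_add r 1 (W_ne_zero hj) (W_ne_top j), ENNReal.rpow_one]
                calc W j ^ r * W j * a j * b k * c (j+k)
                    = (W j ^ (r + 1/2) * a j) * (W j ^ ((1:ℝ)/2))
                        * (b k * c (j+k)) := by rw [hWj]; ring
                _ ≤ (W j ^ (r + 1/2) * a j)
                      * (2 * (W k ^ ((1:ℝ)/2) * W (j+k) ^ ((1:ℝ)/2)))
                      * (b k * c (j+k)) := by
                      exact mul_le_mul' (mul_le_mul' le_rfl (Whalf hk hm)) le_rfl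
                _ = 2 * ((W k ^ ((1:ℝ)/2) * b k)
                      * ((W j ^ (r + 1/2) * a j)
                          * (W (j+k) ^ ((1:ℝ)/2) * c (j+k)))) := by ring
  -- the two main terms
  have hU : ∑' (j : ℤ × ℤ), ∑' (k : ℤ × ℤ), B k * (A j * Cc (j+k))
      ≤ (Kc r ^ ((1:ℝ)/2) * Nn r b) * (Nn (r + 1/2) a * Nn r c) := by
    rw [ENNReal.tsum_comm]
    calc ∑' (k : ℤ × ℤ), ∑' (j : ℤ × ℤ), B k * (A j * Cc (j+k))
        = ∑' (k : ℤ × ℤ), B k * ∑' (j : ℤ × ℤ), A j * Cc (j+k) := by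
          exact tsum_congr fun k => ENNReal.tsum_mul_left
    _ ≤ ∑' (k : ℤ × ℤ), B k * (Nn (r + 1/2) a * Nn r c) := by
          refine Summable.tsum_le_tsum (fun k => ?_) ENNReal.summable ENNReal.summable
          refine mul_le_mul' le_rfl ?_
          refine (cs_shift_right A Cc k).trans ?_
          rw [hNa]
          exact mul_le_mul' le_rfl hC2
    _ = (∑' (k : ℤ × ℤ), B k) * (Nn (r + 1/2) a * Nn r c) := ENNReal.tsum_mul_right
    _ ≤ (Kc r ^ ((1:ℝ)/2) * Nn r b) * (Nn (r + 1/2) a * Nn r c) :=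
          mul_le_mul' hl1B le_rfl
  have hV : ∑' (j : ℤ × ℤ), ∑' (k : ℤ × ℤ), (W j * a j) * (D k * Cz (j+k))
      ≤ (Kc r ^ ((1:ℝ)/2) * Nn (r + 1/2) a) * (Nn r b * Nn r c) := by
    calc ∑' (j : ℤ × ℤ), ∑' (k : ℤ × ℤ), (W j * a j) * (D k * Cz (j+k))
        = ∑' (j : ℤ × ℤ), (W j * a j) * ∑' (k : ℤ × ℤ), D k * Cz (j+k) := by
          exact tsum_congr fun j => ENNReal.tsum_mul_left
    _ ≤ ∑' (j : ℤ × ℤ), (W j * a j) * (Nn r b * Nn r c) := by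
          refine Summable.tsum_le_tsum (fun j => ?_) ENNReal.summable ENNReal.summable
          refine mul_le_mul' le_rfl ?_
          refine (cs_shift_left D Cz j).trans ?_
          exact mul_le_mul' hD2 hCz2
    _ = (∑' (j : ℤ × ℤ), W j * a j) * (Nn r b * Nn r c) := ENNReal.tsum_mul_right
    _ ≤ (Kc r ^ ((1:ℝ)/2) * Nn (r + 1/2) a) * (Nn r b * Nn r c) :=
          mul_le_mul' hl1a le_rfl
  -- assembling
  calc ∑' (j : ℤ × ℤ), ∑' (k : ℤ × ℤ), W j * a j * b k * W (j+k) ^ r * c (j+k)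
      = ∑' (j : ℤ × ℤ), (∑' (k : ℤ × ℤ), (if k = 0 then b 0 * (A j * Cc j) else 0))
          + ∑' (j : ℤ × ℤ), ∑' (k : ℤ × ℤ),
            W j * a j * (χ k * b k) * W (j+k) ^ r * (χ (j+k) * c (j+k)) := by
        rw [← ENNReal.tsum_add]
        refine tsum_congr fun j => ?_
        rw [← ENNReal.tsum_add]
        exact tsum_congr fun k => hsplit j k
  _ ≤ b 0 * (Nn (r + 1/2) a * Nn r c)
        + 2 ^ r * ((2 * ((Kc r ^ ((1:ℝ)/2) * Nn r b) * (Nn (r + 1/2) a * Nn r c)))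
          + ((Kc r ^ ((1:ℝ)/2) * Nn (r + 1/2) a) * (Nn r b * Nn r c))) := by
        refine add_le_add ?_ ?_
        · refine le_trans (le_of_eq ?_) hT0
          exact tsum_congr fun j => tsum_ite_eq (0 : ℤ × ℤ) (fun _ => b 0 * (A j * Cc j))
        · calc ∑' (j : ℤ × ℤ), ∑' (k : ℤ × ℤ),
                W j * a j * (χ k * b k) * W (j+k) ^ r * (χ (j+k) * c (j+k))
              ≤ ∑' (j : ℤ × ℤ), ∑' (k : ℤ × ℤ), 2 ^ r * (2 * (B k * (A j * Cc (j+k)))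
                  + (W j * a j) * (D k * Cz (j+k))) := by
                refine Summable.tsum_le_tsum (fun j => ?_) ENNReal.summable ENNReal.summable
                exact Summable.tsum_le_tsum (fun k => hpt j k) ENNReal.summable ENNReal.summable
          _ = 2 ^ r * ((2 * ∑' (j : ℤ × ℤ), ∑' (k : ℤ × ℤ), B k * (A j * Cc (j+k)))
                + ∑' (j : ℤ × ℤ), ∑' (k : ℤ × ℤ), (W j * a j) * (D k * Cz (j+k))) := by
                have e1 : ∀ (f : ℤ × ℤ → ℤ × ℤ → ℝ≥0∞) (t : ℝ≥0∞),
                    ∑' (j : ℤ × ℤ), ∑' (k : ℤ × ℤ), t * f j k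
                      = t * ∑' (j : ℤ × ℤ), ∑' (k : ℤ × ℤ), f j k := by
                  intro f t
                  rw [← ENNReal.tsum_mul_left]
                  exact tsum_congr fun j => ENNReal.tsum_mul_left
                have e2 : ∀ (u v : ℤ × ℤ → ℤ × ℤ → ℝ≥0∞),
                    ∑' (j : ℤ × ℤ), ∑' (k : ℤ × ℤ), (u j k + v j k)
                      = (∑' (j : ℤ × ℤ), ∑' (k : ℤ × ℤ), u j k)
                        + ∑' (j : ℤ × ℤ), ∑' (k : ℤ × ℤ), v j k := by
                  intro u v
                  rw [← ENNReal.tsum_add]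
                  exact tsum_congr fun j => ENNReal.tsum_add
                rw [e1 (fun j k => 2 * (B k * (A j * Cc (j+k)))
                    + (W j * a j) * (D k * Cz (j+k))) (2 ^ r)]
                rw [e2 (fun j k => 2 * (B k * (A j * Cc (j+k))))
                    (fun j k => (W j * a j) * (D k * Cz (j+k)))]
                rw [e1 (fun j k => B k * (A j * Cc (j+k))) 2]
          _ ≤ 2 ^ r * ((2 * ((Kc r ^ ((1:ℝ)/2) * Nn r b) * (Nn (r + 1/2) a * Nn r c)))
                + ((Kc r ^ ((1:ℝ)/2) * Nn (r + 1/2) a) * (Nn r b * Nn r c))) := by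
                exact mul_le_mul' le_rfl (add_le_add (mul_le_mul' le_rfl hU) hV)
  _ ≤ (1 + 2 ^ r * 3 * Kc r ^ ((1:ℝ)/2)) * Nn (r + 1/2) a * (b 0 + Nn r b)
        * Nn r c := by
      have hX1 : b 0 * (Nn (r + 1/2) a * Nn r c)
          ≤ Nn (r + 1/2) a * (b 0 + Nn r b) * Nn r c := by
        calc b 0 * (Nn (r + 1/2) a * Nn r c)
            = Nn (r + 1/2) a * b 0 * Nn r c := by ring
        _ ≤ Nn (r + 1/2) a * (b 0 + Nn r b) * Nn r c :=
            mul_le_mul' (mul_le_mul' le_rfl le_self_add) le_rfl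
      have hX2 : 2 ^ r * ((2 * ((Kc r ^ ((1:ℝ)/2) * Nn r b) * (Nn (r + 1/2) a * Nn r c)))
            + ((Kc r ^ ((1:ℝ)/2) * Nn (r + 1/2) a) * (Nn r b * Nn r c)))
          ≤ 2 ^ r * 3 * Kc r ^ ((1:ℝ)/2)
              * (Nn (r + 1/2) a * (b 0 + Nn r b) * Nn r c) := by
        calc 2 ^ r * ((2 * ((Kc r ^ ((1:ℝ)/2) * Nn r b) * (Nn (r + 1/2) a * Nn r c)))
              + ((Kc r ^ ((1:ℝ)/2) * Nn (r + 1/2) a) * (Nn r b * Nn r c)))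
            = 2 ^ r * 3 * Kc r ^ ((1:ℝ)/2)
                * (Nn (r + 1/2) a * Nn r b * Nn r c) := by ring
        _ ≤ 2 ^ r * 3 * Kc r ^ ((1:ℝ)/2)
              * (Nn (r + 1/2) a * (b 0 + Nn r b) * Nn r c) := by
            exact mul_le_mul' le_rfl
              (mul_le_mul' (mul_le_mul' le_rfl le_add_self) le_rfl)
      calc b 0 * (Nn (r + 1/2) a * Nn r c)
            + 2 ^ r * ((2 * ((Kc r ^ ((1:ℝ)/2) * Nn r b) * (Nn (r + 1/2) a * Nn r c)))
              + ((Kc r ^ ((1:ℝ)/2) * Nn (r + 1/2) a) * (Nn r b * Nn r c)))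
          ≤ Nn (r + 1/2) a * (b 0 + Nn r b) * Nn r c
            + 2 ^ r * 3 * Kc r ^ ((1:ℝ)/2)
                * (Nn (r + 1/2) a * (b 0 + Nn r b) * Nn r c) := add_le_add hX1 hX2
      _ = (1 + 2 ^ r * 3 * Kc r ^ ((1:ℝ)/2)) * Nn (r + 1/2) a * (b 0 + Nn r b)
            * Nn r c := by ring

/-! ### Comparison with the exponentially weighted norms -/

lemma Nn_le_S (ρ τ : ℝ) (hρ : 0 ≤ ρ) (hτ : 0 ≤ τ) (x : ℤ × ℤ → ℝ≥0∞) :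
    Nn ρ x ≤ S ρ τ x := by
  rw [Nn, S]
  refine ENNReal.rpow_le_rpow ?_ (by norm_num)
  refine Summable.tsum_le_tsum (fun k => ?_) ENNReal.summable ENNReal.summable
  refine mul_le_mul' ?_ le_rfl
  rw [ENNReal.ofReal_mul (Real.rpow_nonneg (nz_nonneg k) _), W,
    ENNReal.ofReal_rpow_of_nonneg (nz_nonneg k) (by linarith)]
  refine le_mul_of_one_le_right' ?_
  rw [← ENNReal.ofReal_one]
  exact ENNReal.ofReal_le_ofReal (Real.one_le_exp (by have := nz_nonneg k; positivity))

lemma Nn_exp_eq_S (ρ τ : ℝ) (hρ : 0 ≤ ρ) (c : ℤ × ℤ → ℝ≥0∞) :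
    Nn ρ (fun m => ENNReal.ofReal (Real.exp (τ * nz m)) * c m) = S ρ τ c := by
  rw [Nn, S]
  refine congrArg (· ^ ((1:ℝ)/2)) (tsum_congr fun m => ?_)
  rw [ENNReal.ofReal_mul (Real.rpow_nonneg (nz_nonneg m) _), W,
    ENNReal.ofReal_rpow_of_nonneg (nz_nonneg m) (by linarith)]
  rw [mul_pow, ← ENNReal.ofReal_pow (Real.exp_nonneg _)]
  rw [show Real.exp (τ * nz m) ^ (2:ℕ) = Real.exp (2 * τ * nz m) by
    rw [mul_assoc, two_mul (τ * nz m), Real.exp_add, sq]]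
  ring

/-- Fourier-coefficient form of the vertical-advection estimate
`|⟨A^r e^{τA}((∫₀^z ∇·f ds) ∂_z g), A^r e^{τA}h⟩|` of Lemma A.2. -/
theorem vertical_advection_estimate :
    ∀ r : ℝ, 3 / 2 < r → ∃ C : ℝ, 0 < C ∧ ∀ τ : ℝ, 0 ≤ τ → ∀ a b c : ℤ × ℤ → ℝ≥0∞,
      (∑' p : (ℤ × ℤ) × (ℤ × ℤ),
          ENNReal.ofReal (nz p.1) * a p.1 * b p.2
            * ENNReal.ofReal (nz (p.1 + p.2) ^ r * Real.exp (τ * nz (p.1 + p.2)))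
            * c (p.1 + p.2))
        ≤ ENNReal.ofReal C * S (r + 1 / 2) τ a * (b 0 + S r τ b)
            * (S r τ c + S (r + 1 / 2) τ c) := by
  intro r hr
  have hr0 : (0:ℝ) < r := by linarith
  set M : ℝ≥0∞ := 1 + 2 ^ r * 3 * Kc r ^ ((1:ℝ)/2) with hM
  have hMtop : M ≠ ⊤ := by
    have h1 : (2:ℝ≥0∞) ^ r ≠ ⊤ :=
      ENNReal.rpow_ne_top_of_nonneg (le_of_lt hr0) (by norm_num)
    have h2 : Kc r ^ ((1:ℝ)/2) ≠ ⊤ :=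
      ENNReal.rpow_ne_top_of_nonneg (by norm_num) (Kc_ne_top hr)
    rw [hM]
    exact ENNReal.add_ne_top.mpr ⟨ENNReal.one_ne_top,
      ENNReal.mul_ne_top (ENNReal.mul_ne_top h1 (by norm_num)) h2⟩
  have hMpos : M ≠ 0 := by
    intro h
    have : (1:ℝ≥0∞) ≤ M := le_self_add
    rw [h] at this
    exact (by norm_num : ¬ ((1:ℝ≥0∞) ≤ 0)) this
  refine ⟨M.toReal, ENNReal.toReal_pos hMpos hMtop, ?_⟩
  intro τ hτ a b c
  rw [ENNReal.ofReal_toReal hMtop]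
  -- rewrite the left-hand side
  have hLHS : (∑' p : (ℤ × ℤ) × (ℤ × ℤ),
      ENNReal.ofReal (nz p.1) * a p.1 * b p.2
        * ENNReal.ofReal (nz (p.1 + p.2) ^ r * Real.exp (τ * nz (p.1 + p.2)))
        * c (p.1 + p.2))
      = ∑' j : ℤ × ℤ, ∑' k : ℤ × ℤ, W j * a j * b k * W (j+k) ^ r
          * ((fun m => ENNReal.ofReal (Real.exp (τ * nz m)) * c m) (j+k)) := by
    rw [ENNReal.tsum_prod']
    refine tsum_congr fun j => tsum_congr fun k => ?_
    show ENNReal.ofReal (nz j) * a j * b k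
        * ENNReal.ofReal (nz (j+k) ^ r * Real.exp (τ * nz (j+k))) * c (j+k) = _
    rw [ENNReal.ofReal_mul (Real.rpow_nonneg (nz_nonneg _) _)]
    show _ = W j * a j * b k * W (j+k) ^ r
        * (ENNReal.ofReal (Real.exp (τ * nz (j+k))) * c (j+k))
    rw [W, W, ← ENNReal.ofReal_rpow_of_nonneg (nz_nonneg _) (le_of_lt hr0)]
    ring
  rw [hLHS]
  refine (core hr a b (fun m => ENNReal.ofReal (Real.exp (τ * nz m)) * c m)).trans ?_
  rw [hM]
  refine mul_le_mul' (mul_le_mul' (mul_le_mul' le_rfl ?_) ?_) ?_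
  · exact Nn_le_S (r + 1/2) τ (by linarith) hτ a
  · exact add_le_add le_rfl (Nn_le_S r τ (le_of_lt hr0) hτ b)
  · rw [Nn_exp_eq_S r τ (le_of_lt hr0) c]
    exact le_self_add

end
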